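/- Let D(X) ⊆ (0,X] be a set of integers with counting function A(u) = cu + O(u^{1/2}), c > 0. Fix τ ∈ ℝ, τ ≠ 0, M > 0, and set R = log(√M X/(2πe)). Then ∑_{d ∈ D(X)} (√M d/(2π))^{-2πiτ/R} = A(X)·e^{-2πiτ − 2πiτ/R}·(1 − 2πiτ/R)^{-1} + O(X^{1/2}). -/

import Mathlib

open Real Filter Asymptotics Classical

lemma sps_sqrt_sum : ∀ n : ℕ, ∑ i ∈ Finset.range n, (1 / Real.sqrt (i+1)) ≤ 2 * Real.sqrt n := by
  intro n
  induction n with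
  | zero => simp
  | succ n ih =>
    rw [Finset.sum_range_succ]
    have h1 : Real.sqrt n ^ 2 = n := Real.sq_sqrt (by positivity)
    have h2 : Real.sqrt ((n:ℝ)+1) ^ 2 = (n:ℝ)+1 := Real.sq_sqrt (by positivity)
    have h3 : (0:ℝ) ≤ Real.sqrt n := Real.sqrt_nonneg _
    have h4 : (0:ℝ) < Real.sqrt ((n:ℝ)+1) := Real.sqrt_pos.2 (by positivity)
    have h5 : Real.sqrt n ≤ Real.sqrt ((n:ℝ)+1) := Real.sqrt_le_sqrt (by linarith)
    have key : 1 / Real.sqrt ((n:ℝ)+1) ≤ 2 * (Real.sqrt ((n:ℝ)+1) - Real.sqrt n) := by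
      rw [div_le_iff₀ h4]
      nlinarith [h2, h1, h3, h4, h5]
    push_cast
    push_cast at ih
    linarith

-- |v^{-s} - u^{-s}| ≤ 2|s|(log v - log u) for purely imaginary s
lemma sps_cpow_diff (s : ℂ) (hre : s.re = 0) {u v : ℝ} (hu : 0 < u) (huv : u ≤ v)
    (hb : ‖s‖ * (Real.log v - Real.log u) ≤ 1) :
    ‖((v:ℂ)) ^ (-s) - ((u:ℂ)) ^ (-s)‖ ≤ 2 * (‖s‖ * (Real.log v - Real.log u)) := by
  have hv : 0 < v := lt_of_lt_of_le hu huv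
  have hLuv : Real.log u ≤ Real.log v := Real.log_le_log hu huv
  rw [Complex.cpow_def_of_ne_zero (by exact_mod_cast hv.ne' : (v:ℂ) ≠ 0),
      Complex.cpow_def_of_ne_zero (by exact_mod_cast hu.ne' : (u:ℂ) ≠ 0),
      ← Complex.ofReal_log hv.le, ← Complex.ofReal_log hu.le]
  have factor : Complex.exp ((Real.log v : ℂ) * (-s)) - Complex.exp ((Real.log u : ℂ) * (-s))
      = Complex.exp ((Real.log u : ℂ) * (-s)) *
        (Complex.exp (((Real.log v : ℝ) - Real.log u : ℝ) * (-s)) - 1) := by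
    rw [mul_sub, mul_one, ← Complex.exp_add]
    congr 2
    push_cast
    ring
  rw [factor, norm_mul]
  have h1 : ‖Complex.exp ((Real.log u : ℂ) * (-s))‖ = 1 := by
    rw [Complex.norm_exp]
    have : ((Real.log u : ℂ) * (-s)).re = Real.log u * (-s).re := by
      simp [Complex.mul_re]
    rw [this]
    simp [hre]
  rw [h1, one_mul]
  have h2 : ‖(((Real.log v : ℝ) - Real.log u : ℝ) : ℂ) * (-s)‖
      = ‖s‖ * (Real.log v - Real.log u) := by
    rw [norm_mul, norm_neg, Complex.norm_real, Real.norm_eq_abs,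
      abs_of_nonneg (by linarith)]
    ring
  calc ‖Complex.exp (((Real.log v : ℝ) - Real.log u : ℝ) * (-s)) - 1‖
      ≤ 2 * ‖(((Real.log v : ℝ) - Real.log u : ℝ) : ℂ) * (-s)‖ := by
        have := Complex.norm_exp_sub_one_le
          (x := (((Real.log v : ℝ) - Real.log u : ℝ) : ℂ) * (-s))
          (by rw [h2]; exact hb)
        simpa using this
    _ = 2 * (‖s‖ * (Real.log v - Real.log u)) := by rw [h2]

-- reindexing Icc 1 X to range X
lemma sps_Icc_range {M : Type*} [AddCommMonoid M] (f : ℕ → M) (X : ℕ) :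
    ∑ m ∈ Finset.Icc 1 X, f m = ∑ k ∈ Finset.range X, f (k+1) := by
  induction X with
  | zero => simp
  | succ X ih =>
    rw [Finset.sum_Icc_succ_top (by omega), Finset.sum_range_succ, ih]

lemma sps_core (s : ℂ) (hre : s.re = 0) (hs : ‖s‖ ≤ 1/2) (X : ℕ) (hX : 1 ≤ X) :
    ‖(∑ m ∈ Finset.Icc 1 X, ((m:ℂ))^(-s)) - (X:ℂ)^(1-s)/(1-s)‖ ≤ 6 * Real.sqrt X := by
  have hs0re : (-s).re = 0 := by simp [hre]
  have h1s : (1:ℂ) - s ≠ 0 := by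
    intro h
    have : ((1:ℂ) - s).re = 0 := by rw [h]; simp
    simp [Complex.sub_re, hre] at this
  have hnorm1 : ∀ u : ℝ, 0 < u → ‖((u:ℂ))^(-s)‖ = 1 := by
    intro u hu
    rw [Complex.norm_cpow_eq_rpow_re_of_pos hu, hs0re, Real.rpow_zero]
  -- the integral identity
  have hint : (X:ℂ)^(1-s)/(1-s) = ∫ u in (0:ℝ)..(X:ℝ), ((u:ℂ))^(-s) := by
    rw [integral_cpow (Or.inl (by rw [hs0re]; norm_num))]
    have h0 : ((0:ℝ):ℂ) = 0 := by norm_num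
    rw [h0, Complex.zero_cpow (by intro h; apply h1s; rw [← h]; ring), sub_zero]
    have hXc : (((X:ℝ)):ℂ) = (X:ℂ) := by push_cast; ring
    rw [hXc, show (-s+1) = (1-s) by ring]
  -- split the integral
  have hia : ∀ a b : ℝ, IntervalIntegrable (fun u : ℝ => ((u:ℂ))^(-s)) MeasureTheory.volume a b :=
    fun a b => intervalIntegral.intervalIntegrable_cpow (Or.inl (le_of_eq hs0re.symm))
  have hsplit : (∫ u in (0:ℝ)..(X:ℝ), ((u:ℂ))^(-s))
      = ∑ k ∈ Finset.range X, ∫ u in ((k:ℕ):ℝ)..(((k+1:ℕ)):ℝ), ((u:ℂ))^(-s) := by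
    rw [intervalIntegral.sum_integral_adjacent_intervals (a := fun k : ℕ => (k:ℝ))
      (fun k _ => hia _ _)]
    norm_num
  rw [hint, hsplit, sps_Icc_range (fun m => ((m:ℂ))^(-s)) X, ← Finset.sum_sub_distrib]
  -- per-term bound
  have hterm : ∀ k ∈ Finset.range X,
      ‖(((k+1:ℕ):ℂ))^(-s) - ∫ u in ((k:ℕ):ℝ)..(((k+1:ℕ)):ℝ), ((u:ℂ))^(-s)‖
        ≤ if k = 0 then 2 else 2 / Real.sqrt (k+1) := by
    intro k _
    have hconst : (((k+1:ℕ):ℂ))^(-s)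
        = ∫ _ in ((k:ℕ):ℝ)..(((k+1:ℕ)):ℝ), (((k+1:ℕ):ℂ))^(-s) := by
      rw [intervalIntegral.integral_const]
      push_cast
      simp
    rw [hconst, ← intervalIntegral.integral_sub (intervalIntegrable_const) (hia _ _)]
    have hlen : |(((k+1:ℕ)):ℝ) - ((k:ℕ):ℝ)| = 1 := by push_cast; simp
    by_cases hk : k = 0
    · subst hk
      simp only [if_pos rfl]
      have := intervalIntegral.norm_integral_le_of_norm_le_const
        (C := 2) (f := fun u : ℝ => (((0+1:ℕ):ℂ))^(-s) - ((u:ℂ))^(-s))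
        (a := ((0:ℕ):ℝ)) (b := ((0+1:ℕ):ℝ)) ?_
      · calc _ ≤ 2 * |(((0+1:ℕ)):ℝ) - ((0:ℕ):ℝ)| := this
          _ = 2 := by rw [hlen]; ring
      · intro u hu
        rw [Set.uIoc_of_le (by norm_num)] at hu
        have hu0 : (0:ℝ) < u := by exact_mod_cast hu.1
        calc ‖(((0+1:ℕ):ℂ))^(-s) - ((u:ℂ))^(-s)‖
            ≤ ‖(((0+1:ℕ):ℂ))^(-s)‖ + ‖((u:ℂ))^(-s)‖ := norm_sub_le _ _
          _ ≤ 2 := by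
              have hc : (((0+1:ℕ):ℂ)) = (((1:ℝ)):ℂ) := by norm_num
              rw [hc, hnorm1 1 one_pos, hnorm1 u hu0]
              norm_num
    · simp only [if_neg hk]
      have hk1 : 1 ≤ k := Nat.one_le_iff_ne_zero.2 hk
      have hkpos : (0:ℝ) < (k:ℝ) := by exact_mod_cast hk1
      have hlog : Real.log ((k:ℝ)+1) - Real.log (k:ℝ) ≤ 1/(k:ℝ) := by
        have h := Real.log_le_sub_one_of_pos (x := ((k:ℝ)+1)/(k:ℝ)) (by positivity)
        rw [Real.log_div (by positivity) (ne_of_gt hkpos)] at h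
        have : ((k:ℝ)+1)/(k:ℝ) - 1 = 1/(k:ℝ) := by field_simp; ring
        linarith [this ▸ h]
      have := intervalIntegral.norm_integral_le_of_norm_le_const
        (C := 1/(k:ℝ)) (f := fun u : ℝ => (((k+1:ℕ):ℂ))^(-s) - ((u:ℂ))^(-s))
        (a := ((k:ℕ):ℝ)) (b := ((k+1:ℕ):ℝ)) ?_
      · calc _ ≤ 1/(k:ℝ) * |(((k+1:ℕ)):ℝ) - ((k:ℕ):ℝ)| := this
          _ = 1/(k:ℝ) := by rw [hlen]; ring
          _ ≤ 2 / Real.sqrt (k+1) := by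
              rw [div_le_div_iff₀ (by positivity) (by positivity)]
              have h2 : Real.sqrt ((k:ℝ)+1) ^ 2 = (k:ℝ)+1 := Real.sq_sqrt (by positivity)
              have hk1' : (1:ℝ) ≤ (k:ℝ) := by exact_mod_cast hk1
              nlinarith [Real.sqrt_nonneg ((k:ℝ)+1), h2, hk1']
      · intro u hu
        rw [Set.uIoc_of_le (by push_cast; linarith)] at hu
        have hu1 : (k:ℝ) < u := by exact_mod_cast hu.1
        have hu2 : u ≤ (k:ℝ)+1 := by
          have := hu.2; push_cast at this; linarith
        have hupos : 0 < u := lt_trans hkpos hu1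
        have hlogu : Real.log ((k:ℝ)+1) - Real.log u ≤ 1/(k:ℝ) := by
          have : Real.log (k:ℝ) ≤ Real.log u := Real.log_le_log hkpos hu1.le
          linarith
        have hb1 : ‖s‖ * (Real.log ((k:ℝ)+1) - Real.log u) ≤ 1 := by
          have hmono : Real.log u ≤ Real.log ((k:ℝ)+1) := Real.log_le_log hupos hu2
          have hn : 0 ≤ ‖s‖ := norm_nonneg s
          have hk1' : (1:ℝ) ≤ (k:ℝ) := by exact_mod_cast hk1
          have : ‖s‖ * (Real.log ((k:ℝ)+1) - Real.log u) ≤ (1/2) * (1/(k:ℝ)) := by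
            apply mul_le_mul hs hlogu (by linarith) (by norm_num)
          calc ‖s‖ * (Real.log ((k:ℝ)+1) - Real.log u) ≤ (1/2) * (1/(k:ℝ)) := this
            _ ≤ 1 := by rw [mul_one_div, div_le_one (by linarith)]; linarith
        have key := sps_cpow_diff s hre (u := u) (v := (k:ℝ)+1) hupos hu2 hb1
        have hcast : (((k+1:ℕ):ℂ)) = ((((k:ℝ)+1 : ℝ)):ℂ) := by push_cast; ring
        rw [hcast]
        calc ‖((((k:ℝ)+1:ℝ)):ℂ)^(-s) - ((u:ℂ))^(-s)‖
            ≤ 2 * (‖s‖ * (Real.log ((k:ℝ)+1) - Real.log u)) := key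
          _ ≤ 2 * ((1/2) * (1/(k:ℝ))) := by
              apply mul_le_mul_of_nonneg_left _ (by norm_num)
              apply mul_le_mul hs hlogu _ (by norm_num)
              have : Real.log u ≤ Real.log ((k:ℝ)+1) := Real.log_le_log hupos hu2
              linarith
          _ = 1/(k:ℝ) := by ring
  -- sum the bounds
  calc ‖∑ k ∈ Finset.range X, ((((k+1:ℕ)):ℂ)^(-s) - ∫ u in ((k:ℕ):ℝ)..(((k+1:ℕ)):ℝ), ((u:ℂ))^(-s))‖
      ≤ ∑ k ∈ Finset.range X, ‖(((k+1:ℕ):ℂ))^(-s) - ∫ u in ((k:ℕ):ℝ)..(((k+1:ℕ)):ℝ), ((u:ℂ))^(-s)‖ :=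
        norm_sum_le _ _
    _ ≤ ∑ k ∈ Finset.range X, (if k = 0 then 2 else 2 / Real.sqrt (k+1)) :=
        Finset.sum_le_sum hterm
    _ ≤ ∑ k ∈ Finset.range X, (2 / Real.sqrt (k+1)) + 2 := by
        obtain ⟨Y, rfl⟩ : ∃ Y, X = Y + 1 := ⟨X - 1, by omega⟩
        rw [Finset.sum_range_succ' (fun k => if k = 0 then (2:ℝ) else 2 / Real.sqrt (k+1)),
          Finset.sum_range_succ' (fun k => 2 / Real.sqrt (k+1))]
        simp only [if_neg (Nat.succ_ne_zero _), if_pos rfl]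
        have : (0:ℝ) ≤ 2 / Real.sqrt (0+1) := by positivity
        push_cast
        linarith
    _ ≤ 4 * Real.sqrt X + 2 := by
        have h := sps_sqrt_sum X
        have h2 : ∑ k ∈ Finset.range X, (2 / Real.sqrt (k+1))
            = 2 * ∑ k ∈ Finset.range X, (1 / Real.sqrt (k+1)) := by
          rw [Finset.mul_sum]
          exact Finset.sum_congr rfl fun k _ => by ring
        rw [h2]
        linarith
    _ ≤ 6 * Real.sqrt X := by
        have : (1:ℝ) ≤ Real.sqrt X := by
          rw [show (1:ℝ) = Real.sqrt 1 by simp]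
          exact Real.sqrt_le_sqrt (by exact_mod_cast hX)
        linarith

lemma sps_abel (𝒟 : Set ℕ) (g : ℕ → ℂ) : ∀ X : ℕ,
    ∑ d ∈ (Finset.Icc 1 X).filter (· ∈ 𝒟), g d
      = (((Finset.Icc 1 X).filter (· ∈ 𝒟)).card : ℂ) * g X
        - ∑ n ∈ Finset.range X, (((Finset.Icc 1 n).filter (· ∈ 𝒟)).card : ℂ) * (g (n+1) - g n) := by
  intro X
  induction X with
  | zero => simp
  | succ X ih =>
    have hins : Finset.Icc 1 (X+1) = insert (X+1) (Finset.Icc 1 X) := by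
      ext x
      simp only [Finset.mem_Icc, Finset.mem_insert]
      omega
    have hnot : X+1 ∉ Finset.Icc 1 X := by simp
    rw [Finset.sum_range_succ, hins, Finset.filter_insert]
    by_cases hd : (X+1) ∈ 𝒟
    · rw [if_pos hd, Finset.sum_insert (fun h => hnot (Finset.mem_filter.1 h).1),
        Finset.card_insert_of_notMem (fun h => hnot (Finset.mem_filter.1 h).1), ih]
      push_cast
      ring
    · rw [if_neg hd, ih]
      push_cast
      ring

lemma sps_abel2 (g : ℕ → ℂ) : ∀ X : ℕ,
    ∑ n ∈ Finset.range X, (n:ℂ) * (g (n+1) - g n)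
      = (X:ℂ) * g X - ∑ m ∈ Finset.Icc 1 X, g m := by
  intro X
  induction X with
  | zero => simp
  | succ X ih =>
    rw [Finset.sum_range_succ, ih, Finset.sum_Icc_succ_top (by omega)]
    push_cast
    ring

lemma sps_main (𝒟 : Set ℕ) (c C : ℝ) (hc : 0 < c) (B : ℝ) (hB : 0 < B)
    (s : ℂ) (hre : s.re = 0) (hs : ‖s‖ ≤ 1/2)
    (hE : ∀ u : ℕ, 1 ≤ u →
      |((((Finset.Icc 1 u).filter (· ∈ 𝒟)).card : ℝ) - c * u)| ≤ C * Real.sqrt u)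
    (X : ℕ) (hX : 1 ≤ X) :
    ‖(∑ d ∈ (Finset.Icc 1 X).filter (· ∈ 𝒟), ((B * d : ℝ) : ℂ) ^ (-s))
      - ((((Finset.Icc 1 X).filter (· ∈ 𝒟)).card : ℝ) : ℂ) * ((B * X : ℝ) : ℂ) ^ (-s)
          * (1 - s)⁻¹‖
      ≤ (6*c + 3*C) * Real.sqrt X := by
  set g : ℕ → ℂ := fun m => ((B * m : ℝ) : ℂ) ^ (-s) with hg
  set A' : ℕ → ℕ := fun n => ((Finset.Icc 1 n).filter (· ∈ 𝒟)).card with hA'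
  have hC0 : 0 ≤ C := by
    have h := hE 1 le_rfl
    have h2 : Real.sqrt ((1:ℕ):ℝ) = 1 := by norm_num
    rw [h2, mul_one] at h
    exact le_trans (abs_nonneg _) h
  have hs0re : (-s).re = 0 := by simp [hre]
  have h1s : (1:ℂ) - s ≠ 0 := by
    intro h
    have : ((1:ℂ) - s).re = 0 := by rw [h]; simp
    simp [Complex.sub_re, hre] at this
  have hnorm1 : ∀ u : ℝ, 0 < u → ‖((u:ℂ))^(-s)‖ = 1 := by
    intro u hu
    rw [Complex.norm_cpow_eq_rpow_re_of_pos hu, hs0re, Real.rpow_zero]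
  have hinv : ‖((1:ℂ) - s)⁻¹‖ ≤ 1 := by
    rw [norm_inv]
    have h1 : (1:ℝ) ≤ ‖(1:ℂ) - s‖ := by
      have := Complex.abs_re_le_norm ((1:ℂ) - s)
      rw [Complex.sub_re, Complex.one_re, hre, sub_zero] at this
      simpa using this
    rw [inv_le_one_iff₀]
    right; exact h1
  -- decomposition
  have split : ∑ n ∈ Finset.range X, ((A' n : ℂ)) * (g (n+1) - g n)
      = (c:ℂ) * (∑ n ∈ Finset.range X, (n:ℂ) * (g (n+1) - g n))
        + ∑ n ∈ Finset.range X, ((((A' n : ℝ) - c*n : ℝ)):ℂ) * (g (n+1) - g n) := by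
    rw [Finset.mul_sum, ← Finset.sum_add_distrib]
    refine Finset.sum_congr rfl fun n _ => ?_
    push_cast
    ring
  have key : (∑ d ∈ (Finset.Icc 1 X).filter (· ∈ 𝒟), g d)
        - ((A' X : ℝ) : ℂ) * g X * (1 - s)⁻¹
      = (c:ℂ) * ((∑ m ∈ Finset.Icc 1 X, g m) - (X:ℂ) * g X * (1 - s)⁻¹)
        - ((((A' X : ℝ) - c*X : ℝ)):ℂ) * g X * s * (1 - s)⁻¹
        - ∑ n ∈ Finset.range X, ((((A' n : ℝ) - c*n : ℝ)):ℂ) * (g (n+1) - g n) := by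
    rw [sps_abel 𝒟 g X, split, sps_abel2 g X]
    push_cast
    field_simp
    ring
  rw [key]
  have hT1 : ‖(c:ℂ) * ((∑ m ∈ Finset.Icc 1 X, g m) - (X:ℂ) * g X * (1 - s)⁻¹)‖
      ≤ c * (6 * Real.sqrt X) := by
    rw [norm_mul]
    have hcc : ‖(c:ℂ)‖ = c := by
      rw [Complex.norm_real, Real.norm_eq_abs, abs_of_pos hc]
    rw [hcc]
    apply mul_le_mul_of_nonneg_left _ hc.le
    have hfac : (∑ m ∈ Finset.Icc 1 X, g m) - (X:ℂ) * g X * (1 - s)⁻¹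
        = ((B:ℝ):ℂ)^(-s) * ((∑ m ∈ Finset.Icc 1 X, ((m:ℂ))^(-s)) - (X:ℂ)^(1-s)/(1-s)) := by
      have hgm : ∀ m : ℕ, g m = ((B:ℝ):ℂ)^(-s) * ((m:ℂ))^(-s) := by
        intro m
        rw [hg]
        simp only
        rw [show ((B * m : ℝ) : ℂ) = ((B:ℝ):ℂ) * (((m:ℕ):ℝ):ℂ) by push_cast; ring,
          Complex.mul_cpow_ofReal_nonneg hB.le (Nat.cast_nonneg m)]
        norm_num
      have hX0 : (X:ℂ) ≠ 0 := by
        exact_mod_cast Nat.cast_ne_zero.2 (by omega)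
      have hXpow : (X:ℂ)^((1:ℂ)-s) = (X:ℂ) * (X:ℂ)^(-s) := by
        rw [show (1:ℂ) - s = 1 + (-s) by ring, Complex.cpow_add _ _ hX0, Complex.cpow_one]
      rw [mul_sub, Finset.mul_sum]
      congr 1
      · exact Finset.sum_congr rfl fun m _ => hgm m
      · rw [hgm X, hXpow]
        field_simp
    rw [hfac, norm_mul, hnorm1 B hB, one_mul]
    exact sps_core s hre hs X hX
  have hT2 : ‖((((A' X : ℝ) - c*X : ℝ)):ℂ) * g X * s * (1 - s)⁻¹‖ ≤ C * Real.sqrt X := by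
    rw [norm_mul, norm_mul, norm_mul]
    have e1 : ‖((((A' X : ℝ) - c*X : ℝ)):ℂ)‖ ≤ C * Real.sqrt X := by
      rw [Complex.norm_real, Real.norm_eq_abs]
      exact hE X hX
    have e2 : ‖g X‖ = 1 := by
      rw [hg]
      exact hnorm1 _ (by positivity)
    have e3 : ‖s‖ ≤ 1 := le_trans hs (by norm_num)
    calc ‖((((A' X : ℝ) - c*X : ℝ)):ℂ)‖ * ‖g X‖ * ‖s‖ * ‖(1 - s)⁻¹‖
        ≤ (C * Real.sqrt X) * 1 * 1 * 1 := by
          apply mul_le_mul (mul_le_mul (mul_le_mul e1 (le_of_eq e2) (norm_nonneg _)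
            (by positivity)) e3 (norm_nonneg _) (by positivity)) hinv (norm_nonneg _)
            (by positivity)
      _ = C * Real.sqrt X := by ring
  have hT3 : ‖∑ n ∈ Finset.range X, ((((A' n : ℝ) - c*n : ℝ)):ℂ) * (g (n+1) - g n)‖
      ≤ 2 * C * Real.sqrt X := by
    calc ‖∑ n ∈ Finset.range X, ((((A' n : ℝ) - c*n : ℝ)):ℂ) * (g (n+1) - g n)‖
        ≤ ∑ n ∈ Finset.range X, ‖((((A' n : ℝ) - c*n : ℝ)):ℂ) * (g (n+1) - g n)‖ :=
          norm_sum_le _ _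
      _ ≤ ∑ n ∈ Finset.range X, (if n = 0 then 0 else C / Real.sqrt n) := by
          apply Finset.sum_le_sum
          intro n _
          by_cases hn : n = 0
          · subst hn
            simp only [if_pos rfl]
            have : A' 0 = 0 := by rw [hA']; simp
            rw [norm_mul]
            simp [this]
          · simp only [if_neg hn]
            have hn1 : 1 ≤ n := Nat.one_le_iff_ne_zero.2 hn
            have hnpos : (0:ℝ) < (n:ℝ) := by exact_mod_cast hn1
            rw [norm_mul]
            have e1 : ‖((((A' n : ℝ) - c*n : ℝ)):ℂ)‖ ≤ C * Real.sqrt n := by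
              rw [Complex.norm_real, Real.norm_eq_abs]
              exact hE n hn1
            have e2 : ‖g (n+1) - g n‖ ≤ 1 / (n:ℝ) := by
              have hu : (0:ℝ) < B * n := by positivity
              have huv : B * (n:ℝ) ≤ B * ((n:ℝ)+1) := by nlinarith
              have hlog : Real.log (B*((n:ℝ)+1)) - Real.log (B*(n:ℝ)) ≤ 1/(n:ℝ) := by
                rw [Real.log_mul hB.ne' (by positivity), Real.log_mul hB.ne' hnpos.ne']
                have h := Real.log_le_sub_one_of_pos (x := ((n:ℝ)+1)/(n:ℝ)) (by positivity)
                rw [Real.log_div (by positivity) hnpos.ne'] at h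
                have : ((n:ℝ)+1)/(n:ℝ) - 1 = 1/(n:ℝ) := by field_simp; ring
                linarith [this ▸ h]
              have hb1 : ‖s‖ * (Real.log (B*((n:ℝ)+1)) - Real.log (B*(n:ℝ))) ≤ 1 := by
                have hmono : Real.log (B*(n:ℝ)) ≤ Real.log (B*((n:ℝ)+1)) :=
                  Real.log_le_log hu huv
                have hn1' : (1:ℝ) ≤ (n:ℝ) := by exact_mod_cast hn1
                have : ‖s‖ * (Real.log (B*((n:ℝ)+1)) - Real.log (B*(n:ℝ)))
                    ≤ (1/2) * (1/(n:ℝ)) :=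
                  mul_le_mul hs hlog (by linarith) (by norm_num)
                calc ‖s‖ * _ ≤ (1/2) * (1/(n:ℝ)) := this
                  _ ≤ 1 := by rw [mul_one_div, div_le_one (by linarith)]; linarith
              have key2 := sps_cpow_diff s hre (u := B*(n:ℝ)) (v := B*((n:ℝ)+1)) hu huv hb1
              have hcast : g (n+1) = ((((B*((n:ℝ)+1)):ℝ)):ℂ)^(-s) := by
                rw [hg]; push_cast; ring_nf
              have hcast2 : g n = ((((B*(n:ℝ)):ℝ)):ℂ)^(-s) := by rw [hg]
              rw [hcast, hcast2]
              have hmono : Real.log (B*(n:ℝ)) ≤ Real.log (B*((n:ℝ)+1)) :=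
                Real.log_le_log hu huv
              have hn1' : (1:ℝ) ≤ (n:ℝ) := by exact_mod_cast hn1
              calc ‖((((B*((n:ℝ)+1)):ℝ)):ℂ)^(-s) - ((((B*(n:ℝ)):ℝ)):ℂ)^(-s)‖
                  ≤ 2 * (‖s‖ * (Real.log (B*((n:ℝ)+1)) - Real.log (B*(n:ℝ)))) := key2
                _ ≤ 2 * ((1/2) * (1/(n:ℝ))) := by
                    apply mul_le_mul_of_nonneg_left _ (by norm_num)
                    exact mul_le_mul hs hlog (by linarith) (by norm_num)
                _ = 1/(n:ℝ) := by ring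
            calc ‖((((A' n : ℝ) - c*n : ℝ)):ℂ)‖ * ‖g (n+1) - g n‖
                ≤ (C * Real.sqrt n) * (1/(n:ℝ)) :=
                  mul_le_mul e1 e2 (norm_nonneg _) (by positivity)
              _ = C / Real.sqrt n := by
                  rw [eq_div_iff (by positivity)]
                  have : Real.sqrt n * Real.sqrt n = (n:ℝ) := Real.mul_self_sqrt hnpos.le
                  field_simp
                  nlinarith [this]
      _ ≤ 2 * C * Real.sqrt X := by
          obtain ⟨Y, rfl⟩ : ∃ Y, X = Y + 1 := ⟨X - 1, by omega⟩
          rw [Finset.sum_range_succ' (fun n => if n = 0 then (0:ℝ) else C / Real.sqrt n)]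
          simp only [if_neg (Nat.succ_ne_zero _), if_pos rfl, add_zero]
          have e4 : ∑ i ∈ Finset.range Y, (C / Real.sqrt (i+1))
              = C * ∑ i ∈ Finset.range Y, (1 / Real.sqrt (i+1)) := by
            rw [Finset.mul_sum]
            exact Finset.sum_congr rfl fun i _ => by push_cast; ring
          push_cast
          rw [e4, add_zero]
          have h5 := sps_sqrt_sum Y
          have h6 : Real.sqrt Y ≤ Real.sqrt ((Y:ℝ)+1) := Real.sqrt_le_sqrt (by linarith)
          calc C * ∑ i ∈ Finset.range Y, (1 / Real.sqrt (i+1))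
              ≤ C * (2 * Real.sqrt Y) := mul_le_mul_of_nonneg_left h5 hC0
            _ ≤ 2 * C * Real.sqrt ((Y:ℝ)+1) := by nlinarith
  calc ‖_ - _ - _‖ ≤ ‖_ - _‖ + ‖_‖ := norm_sub_le _ _
    _ ≤ ‖(c:ℂ) * ((∑ m ∈ Finset.Icc 1 X, g m) - (X:ℂ) * g X * (1 - s)⁻¹)‖
        + ‖((((A' X : ℝ) - c*X : ℝ)):ℂ) * g X * s * (1 - s)⁻¹‖
        + ‖∑ n ∈ Finset.range X, ((((A' n : ℝ) - c*n : ℝ)):ℂ) * (g (n+1) - g n)‖ := by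
        gcongr
        exact norm_sub_le _ _
    _ ≤ c * (6 * Real.sqrt X) + C * Real.sqrt X + 2 * C * Real.sqrt X := by
        gcongr
    _ = (6*c + 3*C) * Real.sqrt X := by ring

/-- If a set `𝒟` of positive integers has counting function `A(u) = cu + O(u^{1/2})`
(uniformly), then for fixed `τ ≠ 0`, `M > 0` and `R = log(√M X/(2πe))`,
`∑_{d ∈ 𝒟, d ≤ X} (√M d/(2π))^{-2πiτ/R} = A(X)·e^{-2πiτ − 2πiτ/R}·(1 − 2πiτ/R)⁻¹
+ O(X^{1/2})`. -/
theorem sum_power_over_family (𝒟 : Set ℕ) (c : ℝ) (hc : 0 < c) (M τ : ℝ)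
    (hM : 0 < M) (hτ : τ ≠ 0)
    (hA : ∃ C : ℝ, ∀ u : ℕ, 1 ≤ u →
      |((((Finset.Icc 1 u).filter (· ∈ 𝒟)).card : ℝ) - c * u)| ≤ C * (u : ℝ) ^ ((1 : ℝ) / 2)) :
    (fun X : ℕ =>
        (∑ d ∈ (Finset.Icc 1 X).filter (· ∈ 𝒟),
            ((Real.sqrt M * d / (2 * π) : ℝ) : ℂ)
              ^ (-(2 * (π : ℂ) * Complex.I * (τ : ℂ))
                  / ((Real.log (Real.sqrt M * X / (2 * π * Real.exp 1)) : ℝ) : ℂ)))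
          - (((Finset.Icc 1 X).filter (· ∈ 𝒟)).card : ℝ)
              * Complex.exp (-(2 * (π : ℂ) * Complex.I * (τ : ℂ))
                  - 2 * (π : ℂ) * Complex.I * (τ : ℂ)
                      / ((Real.log (Real.sqrt M * X / (2 * π * Real.exp 1)) : ℝ) : ℂ))
              * (1 - 2 * (π : ℂ) * Complex.I * (τ : ℂ)
                  / ((Real.log (Real.sqrt M * X / (2 * π * Real.exp 1)) : ℝ) : ℂ))⁻¹)
      =O[atTop] (fun X : ℕ => (X : ℝ) ^ ((1 : ℝ) / 2)) := by
  obtain ⟨C, hC⟩ := hA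
  have hE : ∀ u : ℕ, 1 ≤ u →
      |((((Finset.Icc 1 u).filter (· ∈ 𝒟)).card : ℝ) - c * u)| ≤ C * Real.sqrt u := by
    intro u hu
    have := hC u hu
    rwa [← Real.sqrt_eq_rpow] at this
  have hRt : Tendsto (fun X : ℕ => Real.log (Real.sqrt M * X / (2*π*Real.exp 1)))
      atTop atTop := by
    apply Real.tendsto_log_atTop.comp
    have heq : (fun X : ℕ => Real.sqrt M * (X:ℝ) / (2*π*Real.exp 1))
        = fun X : ℕ => (X:ℝ) * (Real.sqrt M / (2*π*Real.exp 1)) := by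
      funext X; ring
    rw [heq]
    exact tendsto_natCast_atTop_atTop.atTop_mul_const
      (div_pos (Real.sqrt_pos.2 hM) (by positivity))
  rw [isBigO_iff]
  refine ⟨6*c + 3*C, ?_⟩
  filter_upwards [hRt.eventually_ge_atTop (max 1 (4*π*|τ|)), eventually_ge_atTop 1]
    with X hR hX1
  set R : ℝ := Real.log (Real.sqrt M * X / (2*π*Real.exp 1)) with hRdef
  have hR1 : 1 ≤ R := le_trans (le_max_left _ _) hR
  have hRτ : 4*π*|τ| ≤ R := le_trans (le_max_right _ _) hR
  have hRpos : 0 < R := by linarith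
  set s : ℂ := 2 * (π:ℂ) * Complex.I * (τ:ℂ) / (R:ℂ) with hsdef
  have hsI : s = ((2*π*τ/R : ℝ):ℂ) * Complex.I := by
    rw [hsdef]; push_cast; ring
  have hre : s.re = 0 := by
    rw [hsI]; simp [Complex.mul_re]
  have hsnorm : ‖s‖ ≤ 1/2 := by
    rw [hsI, norm_mul, Complex.norm_I, mul_one, Complex.norm_real, Real.norm_eq_abs,
      abs_div, abs_of_pos hRpos]
    have habs : |2*π*τ| = 2*π*|τ| := by
      rw [abs_mul, abs_of_pos (by positivity : (0:ℝ) < 2*π)]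
    rw [habs, div_le_iff₀ hRpos]
    nlinarith [abs_nonneg τ, Real.pi_pos]
  set B : ℝ := Real.sqrt M / (2*π) with hBdef
  have hB : 0 < B := div_pos (Real.sqrt_pos.2 hM) (by positivity)
  have hXpos : (0:ℝ) < (X:ℝ) := by exact_mod_cast hX1
  have hBX : 0 < B * (X:ℝ) := by positivity
  have hbase : ∀ d : ℕ, (Real.sqrt M * (d:ℝ) / (2*π) : ℝ) = B * d := by
    intro d; rw [hBdef]; ring
  have hexp : -(2*(π:ℂ)*Complex.I*(τ:ℂ)) / (R:ℂ) = -s := by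
    rw [hsdef]; ring
  have hlogBX : Real.log (B * X) = R + 1 := by
    have h1 : Real.sqrt M * (X:ℝ) / (2*π*Real.exp 1) = (B * X) / Real.exp 1 := by
      rw [hBdef]; field_simp
    rw [hRdef, h1, Real.log_div hBX.ne' (Real.exp_ne_zero 1), Real.log_exp]
    ring
  have hexp2 : Complex.exp (-(2*(π:ℂ)*Complex.I*(τ:ℂ)) - s)
      = ((B*(X:ℝ) : ℝ):ℂ)^(-s) := by
    rw [Complex.cpow_def_of_ne_zero (by exact_mod_cast hBX.ne' : ((B*(X:ℝ):ℝ):ℂ) ≠ 0),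
      ← Complex.ofReal_log hBX.le, hlogBX]
    congr 1
    rw [hsdef]
    have hR0 : (R:ℂ) ≠ 0 := by exact_mod_cast hRpos.ne'
    field_simp
    push_cast
    ring
  simp only [hbase, hexp, hexp2]
  calc ‖(∑ d ∈ (Finset.Icc 1 X).filter (· ∈ 𝒟), ((B * d : ℝ) : ℂ) ^ (-s))
        - ((((Finset.Icc 1 X).filter (· ∈ 𝒟)).card : ℝ) : ℂ) * ((B * (X:ℝ) : ℝ) : ℂ) ^ (-s)
            * (1 - s)⁻¹‖
      ≤ (6*c + 3*C) * Real.sqrt X :=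
        sps_main 𝒟 c C hc B hB s hre hsnorm hE X hX1
    _ = (6*c + 3*C) * ‖(X:ℝ) ^ ((1:ℝ)/2)‖ := by
        rw [Real.norm_eq_abs, abs_of_nonneg (Real.rpow_nonneg (Nat.cast_nonneg X) _),
          ← Real.sqrt_eq_rpow]
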